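/- Let P be a poset and I ⊆ P a subset that is down-closed (y ≤ x ∈ I implies y ∈ I) and directed (any two elements of I have a common upper bound in I). Then the interval module 𝔽_I : P → Vec_𝔽, which assigns 𝔽 to elements of I and 0 otherwise, with identity maps between elements of I and zero maps otherwise, is an injective object in the functor category Fun(P, Vec_𝔽). -/

import Mathlib

open CategoryTheory

attribute [local instance] Classical.propDecidable

noncomputable section

variable (𝔽 : Type*) [Field 𝔽] {P : Type*} [PartialOrder P]

/-- The carrier of the interval module: `𝔽` on `I`, `0` outside, realized as a
submodule of `𝔽`. -/
def intervalCarrier (I : Set P) (x : P) : Submodule 𝔽 𝔽 :=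
  if x ∈ I then ⊤ else ⊥

/-- The structure map of the interval module: the identity if both endpoints lie
in `I`, and zero otherwise. -/
def intervalMap (I : Set P) (x y : P) :
    intervalCarrier 𝔽 I x →ₗ[𝔽] intervalCarrier 𝔽 I y where
  toFun v := ⟨if x ∈ I ∧ y ∈ I then (v : 𝔽) else 0, by
    by_cases hy : y ∈ I
    · simp [intervalCarrier, hy]
    · have hxy : ¬(x ∈ I ∧ y ∈ I) := fun h => hy h.2
      simp only [intervalCarrier, hy, hxy, and_false, if_false, Submodule.mem_bot]⟩
  map_add' v w := Subtype.ext (by split_ifs <;> simp)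
  map_smul' c v := Subtype.ext (by split_ifs <;> simp)

lemma intervalMap_id (I : Set P) (x : P) :
    intervalMap 𝔽 I x x = LinearMap.id := by
  ext v
  show (if x ∈ I ∧ x ∈ I then (v : 𝔽) else 0) = (v : 𝔽)
  by_cases hx : x ∈ I
  · simp [hx]
  · have := v.2
    simp only [intervalCarrier, hx, if_false, Submodule.mem_bot] at this
    simp [hx, this]

lemma intervalMap_comp (I : Set P) (hdc : ∀ {x y : P}, x ≤ y → y ∈ I → x ∈ I)
    {x y z : P} (h : x ≤ y) (h' : y ≤ z) :
    (intervalMap 𝔽 I y z).comp (intervalMap 𝔽 I x y) = intervalMap 𝔽 I x z := by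
  ext v
  show (if y ∈ I ∧ z ∈ I then (if x ∈ I ∧ y ∈ I then (v : 𝔽) else 0) else 0)
      = (if x ∈ I ∧ z ∈ I then (v : 𝔽) else 0)
  by_cases hy : y ∈ I
  · by_cases hx : x ∈ I <;> by_cases hz : z ∈ I <;> simp [hx, hy, hz]
  · have h1 : ¬(x ∈ I ∧ z ∈ I) := fun hc => hy (hdc h' hc.2)
    have h2 : ¬(x ∈ I ∧ y ∈ I) := fun hc => hy hc.2
    have h3 : ¬(y ∈ I ∧ z ∈ I) := fun hc => hy hc.1
    simp [h1, h2, h3]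

/-- The interval module `𝔽_I : P ⥤ Vec_𝔽` over a down-closed subset `I ⊆ P`:
it is `𝔽` on elements of `I` and `0` elsewhere, with structure maps the identity
between elements of `I` and zero otherwise. -/
def intervalModule (I : Set P) (hdc : ∀ {x y : P}, x ≤ y → y ∈ I → x ∈ I) :
    P ⥤ ModuleCat 𝔽 where
  obj x := ModuleCat.of 𝔽 (intervalCarrier 𝔽 I x)
  map {x y} _ := ModuleCat.ofHom (intervalMap 𝔽 I x y)
  map_id x := ModuleCat.hom_ext (intervalMap_id 𝔽 I x)
  map_comp {x y z} h h' :=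
    ModuleCat.hom_ext (intervalMap_comp 𝔽 I hdc (leOfHom h) (leOfHom h')).symm

lemma intervalMap_coe (I : Set P) (x y : P) (v : intervalCarrier 𝔽 I x) :
    ((intervalMap 𝔽 I x y v : intervalCarrier 𝔽 I y) : 𝔽)
      = if x ∈ I ∧ y ∈ I then (v : 𝔽) else 0 := rfl

/-- If `I ⊆ P` is down-closed and directed, then the interval module `𝔽_I` is an
injective object of the functor category `Fun(P, Vec_𝔽)`. -/
theorem intervalModule_injective (I : Set P)
    (hdc : ∀ {x y : P}, x ≤ y → y ∈ I → x ∈ I)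
    (hdir : ∀ x ∈ I, ∀ y ∈ I, ∃ u ∈ I, x ≤ u ∧ y ≤ u) :
    Injective (intervalModule 𝔽 I hdc) := by
  constructor
  intro X Y g f hf
  have subsing : ∀ {x : P}, x ∉ I → Subsingleton ((intervalModule 𝔽 I hdc).obj x) := by
    intro x hx
    have hbot : intervalCarrier 𝔽 I x = ⊥ := if_neg hx
    show Subsingleton (intervalCarrier 𝔽 I x)
    rw [hbot]; infer_instance
  by_cases hI : ∃ x, x ∈ I
  swap
  · refine ⟨0, ?_⟩
    ext x v
    have := subsing (fun h => hI ⟨x, h⟩)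
    exact Subsingleton.elim _ _
  obtain ⟨x₀, hx₀⟩ := hI
  haveI : Nonempty I := ⟨⟨x₀, hx₀⟩⟩
  haveI : IsDirected I (· ≤ ·) := ⟨fun a b => by
    obtain ⟨u, hu, h1, h2⟩ := hdir a a.2 b b.2
    exact ⟨⟨u, hu⟩, h1, h2⟩⟩
  have finj : ∀ x : P, Function.Injective (f.app x) := by
    intro x
    haveI : Mono (f.app x) := inferInstance
    exact (ModuleCat.mono_iff_injective (f.app x)).1 this
  let GX : I → Type _ := fun i => X.obj i.1
  let GY : I → Type _ := fun i => Y.obj i.1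
  let fX : ∀ i j : I, i ≤ j → GX i →ₗ[𝔽] GX j := fun i j hij =>
    (X.map (homOfLE (Subtype.coe_le_coe.2 hij))).hom
  let fY : ∀ i j : I, i ≤ j → GY i →ₗ[𝔽] GY j := fun i j hij =>
    (Y.map (homOfLE (Subtype.coe_le_coe.2 hij))).hom
  have natf : ∀ (i j : I) (h : i ≤ j) (v : GX i),
      f.app j.1 (fX i j h v) = fY i j h (f.app i.1 v) := fun i j h v =>
    congrArg (fun φ => ModuleCat.Hom.hom φ v) (f.naturality (homOfLE (Subtype.coe_le_coe.2 h)))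
  haveI dsX : DirectedSystem GX (fun i j h => fX i j h) := by
    constructor
    · intro i x
      show X.map (homOfLE _) x = x
      rw [show homOfLE (Subtype.coe_le_coe.2 (le_refl i)) = 𝟙 i.1 from rfl, X.map_id]
      rfl
    · intro k j i hij hjk x
      show X.map _ (X.map _ x) = X.map _ x
      rw [show homOfLE (Subtype.coe_le_coe.2 (hij.trans hjk))
            = homOfLE (Subtype.coe_le_coe.2 hij) ≫ homOfLE (Subtype.coe_le_coe.2 hjk) from rfl,
          X.map_comp]
      rfl
  haveI dsY : DirectedSystem GY (fun i j h => fY i j h) := by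
    constructor
    · intro i x
      show Y.map (homOfLE _) x = x
      rw [show homOfLE (Subtype.coe_le_coe.2 (le_refl i)) = 𝟙 i.1 from rfl, Y.map_id]
      rfl
    · intro k j i hij hjk x
      show Y.map _ (Y.map _ x) = Y.map _ x
      rw [show homOfLE (Subtype.coe_le_coe.2 (hij.trans hjk))
            = homOfLE (Subtype.coe_le_coe.2 hij) ≫ homOfLE (Subtype.coe_le_coe.2 hjk) from rfl,
          Y.map_comp]
      rfl
  let gbar : Module.DirectLimit GX fX →ₗ[𝔽] 𝔽 :=
    Module.DirectLimit.lift 𝔽 I GX fX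
      (fun i => (intervalCarrier 𝔽 I i.1).subtype ∘ₗ (g.app i.1).hom)
      (by
        intro i j hij v
        have h1 : g.app j.1 (fX i j hij v) = intervalMap 𝔽 I i.1 j.1 (g.app i.1 v) :=
          congrArg (fun φ => ModuleCat.Hom.hom φ v) (g.naturality (homOfLE (Subtype.coe_le_coe.2 hij)))
        show (intervalCarrier 𝔽 I j.1).subtype (g.app j.1 (fX i j hij v))
            = (intervalCarrier 𝔽 I i.1).subtype (g.app i.1 v)
        rw [h1]
        exact (intervalMap_coe 𝔽 I i.1 j.1 _).trans (if_pos ⟨i.2, j.2⟩))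
  let m : Module.DirectLimit GX fX →ₗ[𝔽] Module.DirectLimit GY fY :=
    Module.DirectLimit.map (f := fX) (f' := fY) (fun i => (f.app i.1).hom)
      (fun i j h => LinearMap.ext fun v => natf i j h v)
  have hm : ∀ (i : I) (w : GX i), m (Module.DirectLimit.of 𝔽 I GX fX i w)
      = Module.DirectLimit.of 𝔽 I GY fY i (f.app i.1 w) := fun i w =>
    Module.DirectLimit.map_apply_of _ _ _
  have minj : Function.Injective m := by
    rw [injective_iff_map_eq_zero]
    intro z hz
    induction z using Module.DirectLimit.induction_on with
    | ih i v =>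
      rw [hm] at hz
      obtain ⟨j, hij, hj0⟩ := Module.DirectLimit.of.zero_exact hz
      have h2 : f.app j.1 (fX i j hij v) = 0 := by rw [natf i j hij v]; exact hj0
      have h3 : fX i j hij v = 0 := finj j.1 (by rw [h2, map_zero])
      have h4 := Module.DirectLimit.of_f (f := fX) (hij := hij) (x := v)
      rw [← h4, h3, map_zero]
  obtain ⟨l, hl⟩ := LinearMap.exists_leftInverse_of_injective m (LinearMap.ker_eq_bot.2 minj)
  let h' : Module.DirectLimit GY fY →ₗ[𝔽] 𝔽 := gbar ∘ₗ l
  have key : ∀ (i : I) (v : GX i),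
      h' (Module.DirectLimit.of 𝔽 I GY fY i (f.app i.1 v))
        = (intervalCarrier 𝔽 I i.1).subtype (g.app i.1 v) := by
    intro i v
    have h1 : Module.DirectLimit.of 𝔽 I GY fY i (f.app i.1 v)
        = m (Module.DirectLimit.of 𝔽 I GX fX i v) := (hm i v).symm
    have h2 : l (m (Module.DirectLimit.of 𝔽 I GX fX i v))
        = Module.DirectLimit.of 𝔽 I GX fX i v := LinearMap.congr_fun hl _
    show gbar (l _) = _
    rw [h1, h2]
    exact Module.DirectLimit.lift_of _ _ _
  let happ : ∀ x : P, (Y.obj x →ₗ[𝔽] intervalCarrier 𝔽 I x) := fun x =>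
    if hx : x ∈ I then
      LinearMap.codRestrict (intervalCarrier 𝔽 I x)
        (h' ∘ₗ Module.DirectLimit.of 𝔽 I GY fY ⟨x, hx⟩)
        (fun w => by simp [intervalCarrier, hx])
    else 0
  have happ_val : ∀ (x : P) (hx : x ∈ I) (w : Y.obj x),
      ((happ x w : intervalCarrier 𝔽 I x) : 𝔽)
        = h' (Module.DirectLimit.of 𝔽 I GY fY ⟨x, hx⟩ w) := by
    intro x hx w
    simp only [happ, dif_pos hx]
    rfl
  refine ⟨{ app := fun x => ModuleCat.ofHom (happ x), naturality := ?_ }, ?_⟩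
  · intro x y φ
    by_cases hy : y ∈ I
    · have hx : x ∈ I := hdc (leOfHom φ) hy
      refine ModuleCat.hom_ext (LinearMap.ext fun w => Subtype.ext ?_)
      have e1 : ((happ y ((Y.map φ) w) : intervalCarrier 𝔽 I y) : 𝔽)
          = h' (Module.DirectLimit.of 𝔽 I GY fY ⟨y, hy⟩ ((Y.map φ) w)) := happ_val y hy _
      have e2 : Module.DirectLimit.of 𝔽 I GY fY ⟨y, hy⟩ ((Y.map φ) w)
          = Module.DirectLimit.of 𝔽 I GY fY ⟨x, hx⟩ w := by
        have e3 : (Y.map φ) w = fY ⟨x, hx⟩ ⟨y, hy⟩ (leOfHom φ) w := rfl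
        rw [e3]
        exact Module.DirectLimit.of_f (R := 𝔽) (ι := I) (G := GY) (f := fY)
          (hij := Subtype.mk_le_mk.2 (leOfHom φ)) (x := w)
      show ((happ y ((Y.map φ) w) : intervalCarrier 𝔽 I y) : 𝔽)
          = ((intervalMap 𝔽 I x y (happ x w) : intervalCarrier 𝔽 I y) : 𝔽)
      rw [e1, e2, intervalMap_coe, if_pos ⟨hx, hy⟩, happ_val x hx]
    · haveI := subsing hy
      exact ModuleCat.hom_ext (LinearMap.ext fun w => Subsingleton.elim _ _)
  · ext x v
    by_cases hx : x ∈ I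
    · refine Subtype.ext ?_
      show ((happ x ((f.app x) v) : intervalCarrier 𝔽 I x) : 𝔽)
          = (intervalCarrier 𝔽 I x).subtype (g.app x v)
      rw [happ_val x hx]
      exact key ⟨x, hx⟩ v
    · haveI := subsing hx
      exact Subsingleton.elim _ _

end
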